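/- The even moments of the standard semicircle law are the Catalan numbers: for every natural number k, (1/(2π)) ∫_{-2}^{2} t^{2k} √(4 − t²) dt = catalan(k), the k-th Catalan number. -/

import Mathlib

open Real Finset intervalIntegral

private lemma sin_pow_even_symm (n : ℕ) :
    (∫ x in (-(π/2))..(π/2), Real.sin x ^ (2 * n)) = ∫ x in (0:ℝ)..π, Real.sin x ^ (2 * n) := by
  have hInt : ∀ a b : ℝ, IntervalIntegrable (fun x => Real.sin x ^ (2 * n)) MeasureTheory.volume a b :=
    fun a b => (continuous_sin.pow _).intervalIntegrable a b
  have h1 : (∫ x in (-(π/2))..(0:ℝ), Real.sin x ^ (2 * n))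
      = ∫ x in (0:ℝ)..(π/2), Real.sin x ^ (2 * n) := by
    have := intervalIntegral.integral_comp_neg (a := (0:ℝ)) (b := π/2)
      (fun x => Real.sin x ^ (2 * n))
    simp only [neg_zero] at this
    rw [← this]
    refine intervalIntegral.integral_congr fun x _ => ?_
    rw [Real.sin_neg, Even.neg_pow (even_two_mul n)]
  have h2 : (∫ x in (π/2)..π, Real.sin x ^ (2 * n))
      = ∫ x in (0:ℝ)..(π/2), Real.sin x ^ (2 * n) := by
    have := intervalIntegral.integral_comp_sub_left (a := (0:ℝ)) (b := π/2)
      (fun x => Real.sin x ^ (2 * n)) π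
    rw [sub_zero, (by ring : π - π/2 = π/2)] at this
    rw [← this]
    refine intervalIntegral.integral_congr fun x _ => ?_
    rw [Real.sin_pi_sub]
  rw [← intervalIntegral.integral_add_adjacent_intervals (hInt (-(π/2)) 0) (hInt 0 (π/2)),
      ← intervalIntegral.integral_add_adjacent_intervals (hInt 0 (π/2)) (hInt (π/2) π),
      h1, h2]

private lemma prod_eq_centralBinom (k : ℕ) :
    (4:ℝ) ^ k * ∏ i ∈ range k, (2 * (i:ℝ) + 1) / (2 * i + 2) = (Nat.centralBinom k : ℝ) := by
  induction k with
  | zero => simp [Nat.centralBinom]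
  | succ n ih =>
    have key := Nat.succ_mul_centralBinom_succ n
    have keyR : ((n:ℝ) + 1) * (Nat.centralBinom (n+1) : ℝ)
        = 2 * (2 * n + 1) * (Nat.centralBinom n : ℝ) := by exact_mod_cast key
    rw [prod_range_succ, pow_succ]
    have hne : (2 * (n:ℝ) + 2) ≠ 0 := by positivity
    have hne2 : ((n:ℝ) + 1) ≠ 0 := by positivity
    have h' : (4:ℝ)^n * 4 * ((∏ i ∈ range n, (2 * (i:ℝ) + 1) / (2 * i + 2)) * ((2*n+1)/(2*n+2)))
        = 4 * ((Nat.centralBinom n : ℝ)) * ((2*n+1)/(2*n+2)) := by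
      rw [show (4:ℝ)^n * 4 * ((∏ i ∈ range n, (2 * (i:ℝ) + 1) / (2 * i + 2)) * ((2*n+1)/(2*n+2)))
          = 4 * ((4:ℝ)^n * ∏ i ∈ range n, (2 * (i:ℝ) + 1) / (2 * i + 2)) * ((2*n+1)/(2*n+2)) by ring, ih]
    rw [h']
    field_simp
    linear_combination (-2) * keyR

/-- The even moments of the standard semicircle law are the Catalan numbers:
`(1/(2π)) ∫_{-2}^{2} t^{2k} √(4 − t²) dt = catalan k`. -/
theorem semicircle_even_moments_catalan (k : ℕ) :
    (1 / (2 * Real.pi)) *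
      ∫ t in (-2 : ℝ)..(2 : ℝ), t ^ (2 * k) * Real.sqrt (4 - t ^ 2) = (catalan k : ℝ) := by
  have hsub : (∫ t in (-2 : ℝ)..(2 : ℝ), t ^ (2 * k) * Real.sqrt (4 - t ^ 2))
      = ∫ x in (-(π/2))..(π/2),
          (2 * Real.sin x) ^ (2 * k) * Real.sqrt (4 - (2 * Real.sin x) ^ 2) * (2 * Real.cos x) := by
    have hg : ∀ x ∈ Set.uIcc (-(π/2)) (π/2),
        HasDerivAt (fun y => 2 * Real.sin y) (2 * Real.cos x) x :=
      fun x _ => (Real.hasDerivAt_sin x).const_mul 2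
    have := intervalIntegral.integral_comp_mul_deriv hg
      (Continuous.continuousOn (by fun_prop))
      (g := fun t => t ^ (2 * k) * Real.sqrt (4 - t ^ 2))
      (by fun_prop)
    simp only [Function.comp] at this
    norm_num [Real.sin_pi_div_two] at this
    exact this.symm
  have hcos : ∀ x ∈ Set.uIcc (-(π/2)) (π/2),
      Real.sqrt (4 - (2 * Real.sin x) ^ 2) = 2 * Real.cos x := by
    intro x hx
    rw [Set.uIcc_of_le (by linarith [pi_pos]) ] at hx
    have hc : 0 ≤ Real.cos x := Real.cos_nonneg_of_mem_Icc hx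
    have : 4 - (2 * Real.sin x) ^ 2 = (2 * Real.cos x) ^ 2 := by
      have := Real.sin_sq_add_cos_sq x; nlinarith
    rw [this, Real.sqrt_sq (by linarith)]
  have hstep : (∫ x in (-(π/2))..(π/2),
      (2 * Real.sin x) ^ (2 * k) * Real.sqrt (4 - (2 * Real.sin x) ^ 2) * (2 * Real.cos x))
      = (4:ℝ)^(k+1) * ((∫ x in (0:ℝ)..π, Real.sin x ^ (2*k))
          - ∫ x in (0:ℝ)..π, Real.sin x ^ (2*(k+1))) := by
    have h1 : (∫ x in (-(π/2))..(π/2),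
        (2 * Real.sin x) ^ (2 * k) * Real.sqrt (4 - (2 * Real.sin x) ^ 2) * (2 * Real.cos x))
        = ∫ x in (-(π/2))..(π/2),
            (4:ℝ)^(k+1) * (Real.sin x ^ (2*k) - Real.sin x ^ (2*(k+1))) := by
      refine intervalIntegral.integral_congr fun x hx => ?_
      rw [hcos x hx]
      have h4 : (2 * Real.sin x) ^ (2 * k) = 4 ^ k * Real.sin x ^ (2 * k) := by
        rw [mul_pow, pow_mul]; norm_num
      have hc2 : (2 * Real.cos x) * (2 * Real.cos x) = 4 * (1 - Real.sin x ^ 2) := by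
        have := Real.sin_sq_add_cos_sq x; nlinarith
      have : Real.sin x ^ (2*(k+1)) = Real.sin x ^ (2*k) * Real.sin x ^ 2 := by
        rw [← pow_add]; ring_nf
      rw [this, h4]
      linear_combination (4:ℝ)^k * Real.sin x ^ (2*k) * hc2
    rw [h1, intervalIntegral.integral_const_mul, intervalIntegral.integral_sub (f := fun x => Real.sin x ^ (2*k)) (g := fun x => Real.sin x ^ (2*(k+1)))
      ((continuous_sin.pow _).intervalIntegrable _ _)
      ((continuous_sin.pow _).intervalIntegrable _ _),
      sin_pow_even_symm k, sin_pow_even_symm (k+1)]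
  rw [hsub, hstep, integral_sin_pow_even, integral_sin_pow_even, prod_range_succ]
  have hP := prod_eq_centralBinom k
  have hcat : ((k:ℝ) + 1) * (catalan k : ℝ) = (Nat.centralBinom k : ℝ) := by
    exact_mod_cast succ_mul_catalan_eq_centralBinom k
  have hpi := Real.pi_ne_zero
  have h4k : (4:ℝ)^k ≠ 0 := by positivity
  have hk1 : ((k:ℝ) + 1) ≠ 0 := by positivity
  have hk2 : (2 * (k:ℝ) + 2) ≠ 0 := by positivity
  have hPval : (∏ i ∈ range k, (2 * (i:ℝ) + 1) / (2 * i + 2)) = (Nat.centralBinom k : ℝ) / 4^k := by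
    rw [eq_div_iff h4k]; linear_combination hP
  rw [hPval]
  field_simp
  linear_combination (-(4 * (4:ℝ)^k)) * hcat
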